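/- arXiv:2308.00900 — 2 statements merged into one kernel-verified Lean document; each statement's English description precedes it below -/
import Mathlib

section
/- For n ≥ 2, metric balls in the space of immersed rectifiable paths in ℝⁿ under the path Fréchet distance are path-connected: let δ > 0 and let α, β₁, β₂ : [0,1] → ℝⁿ be continuous, rectifiable, locally injective paths with d_FP(α,β₁) < δ and d_FP(α,β₂) < δ. Then there exists a family Γ : [0,1] → ([0,1] → ℝⁿ) such that each Γ_t is continuous, rectifiable, and locally injective, d_FP(Γ_0, β₁) = 0, d_FP(Γ_1, β₂) = 0, t ↦ Γ_t is continuous with respect to d_FP, and d_FP(α, Γ_t) < δ for all t ∈ [0,1]. -/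
open unitInterval

/-- The path Fréchet distance: infimum over orientation-preserving
homeomorphisms of `[0,1]` (i.e. those fixing `0`) of the sup of distances. -/
noncomputable def dFP {E : Type*} [PseudoEMetricSpace E]
    (α β : unitInterval → E) : ENNReal :=
  ⨅ r : {r : unitInterval ≃ₜ unitInterval // r 0 = 0},
    ⨆ t : unitInterval, edist (α t) (β (r.1 t))

/-- The graph Fréchet distance: infimum over all homeomorphisms `h : X ≃ₜ Y`
of the sup of distances; it is `∞` if `X` and `Y` are not homeomorphic. -/
noncomputable def dFG {X Y E : Type*} [TopologicalSpace X] [TopologicalSpace Y]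
    [PseudoEMetricSpace E] (φ : X → E) (ψ : Y → E) : ENNReal :=
  ⨅ h : X ≃ₜ Y, ⨆ x : X, edist (φ x) (ψ (h x))

/-- A path is rectifiable if it has bounded variation (finite length). -/
def Rectifiable {E : Type*} [PseudoEMetricSpace E] (γ : unitInterval → E) : Prop :=
  BoundedVariationOn γ Set.univ

/-- A map is locally injective (an immersion) if every point of the domain has
a neighborhood on which the map is injective. -/
def LocallyInjective {X Y : Type*} [TopologicalSpace X] (f : X → Y) : Prop :=
  ∀ x : X, ∃ U ∈ nhds x, Set.InjOn f U

/-- A map of the circle is rectifiable if `t ↦ φ(e^{2πit})` has bounded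
variation on `[0,1]`. -/
def CircleRectifiable {E : Type*} [PseudoEMetricSpace E] (φ : Circle → E) : Prop :=
  BoundedVariationOn (fun t : ℝ => φ (Circle.exp (2 * Real.pi * t))) (Set.Icc (0:ℝ) 1)


open Set
open scoped ENNReal NNReal RealInnerProductSpace

section AuxLemmas



variable {E : Type*} [PseudoEMetricSpace E] {F : Type*} [PseudoEMetricSpace F]

lemma eVariationOn_le_of_edist_le {α : Type*} [LinearOrder α] {f : α → E} {g : α → F} {s : Set α}
    (h : ∀ x ∈ s, ∀ y ∈ s, edist (f x) (f y) ≤ edist (g x) (g y)) :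
    eVariationOn f s ≤ eVariationOn g s := by
  refine iSup_le ?_
  rintro ⟨n, u, hu, us⟩
  calc (∑ i ∈ Finset.range n, edist (f (u (i+1))) (f (u i)))
      ≤ ∑ i ∈ Finset.range n, edist (g (u (i+1))) (g (u i)) :=
        Finset.sum_le_sum fun i _ => h _ (us _) _ (us _)
    _ ≤ eVariationOn g s := eVariationOn.sum_le (f := g) (n := n) hu us

lemma eVariationOn_add_le {α : Type*} [LinearOrder α] {V : Type*} [SeminormedAddCommGroup V]
    (f g : α → V) (s : Set α) :
    eVariationOn (fun x => f x + g x) s ≤ eVariationOn f s + eVariationOn g s := by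
  refine iSup_le ?_
  rintro ⟨n, u, hu, us⟩
  calc ∑ i ∈ Finset.range n, edist (f (u (i+1)) + g (u (i+1))) (f (u i) + g (u i))
      ≤ ∑ i ∈ Finset.range n,
          (edist (f (u (i+1))) (f (u i)) + edist (g (u (i+1))) (g (u i))) :=
        Finset.sum_le_sum fun i _ => edist_add_add_le _ _ _ _
    _ = (∑ i ∈ Finset.range n, edist (f (u (i+1))) (f (u i)))
        + ∑ i ∈ Finset.range n, edist (g (u (i+1))) (g (u i)) := Finset.sum_add_distrib
    _ ≤ _ := add_le_add (eVariationOn.sum_le (f := f) (n := n) hu us) (eVariationOn.sum_le (f := g) (n := n) hu us)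




section VarCont
variable {E : Type*} [PseudoMetricSpace E]

lemma small_var_right (γ : unitInterval → E) (hc : Continuous γ)
    (hbv : BoundedVariationOn γ Set.univ) (x₀ : unitInterval) (hx : x₀ < 1)
    {η : ℝ} (hη : 0 < η) :
    ∃ w : unitInterval, x₀ < w ∧ eVariationOn γ (Icc x₀ w) ≤ ENNReal.ofReal η := by
  set VR := eVariationOn γ (Icc x₀ 1) with hVR
  have hVRtop : VR ≠ ⊤ := by
    intro h
    exact hbv (top_le_iff.mp (h ▸ eVariationOn.mono γ (subset_univ _)))
  by_cases hVR0 : VR = 0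
  · exact ⟨1, hx, by rw [← hVR, hVR0]; exact zero_le⟩
  set c := ENNReal.ofReal (η/3) with hc3
  have hc0 : c ≠ 0 := by
    simp [hc3, ENNReal.ofReal_eq_zero]; linarith
  have hlt : VR - c < VR := ENNReal.sub_lt_self hVRtop hVR0 hc0
  rw [hVR, eVariationOn, lt_iSup_iff] at hlt
  obtain ⟨⟨n, u, hu, us⟩, hsum⟩ := hlt
  -- continuity at x₀
  have hcont := Metric.continuous_iff.mp hc x₀ (η/(12*(n+1)))
    (by positivity)
  obtain ⟨ρ₀, hρ₀, hball⟩ := hcont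
  -- choose w
  have hx₀1 : (x₀ : ℝ) < 1 := hx
  have hwmem : min 1 ((x₀ : ℝ) + ρ₀/2) ∈ Set.Icc (0:ℝ) 1 :=
    ⟨le_min zero_le_one (by have := x₀.2.1; linarith), min_le_left _ _⟩
  set w : unitInterval := ⟨min 1 ((x₀ : ℝ) + ρ₀/2), hwmem⟩ with hwdef
  have hx₀w : x₀ < w := by
    rw [← Subtype.coe_lt_coe]
    exact lt_min hx₀1 (by linarith)
  have hwx₀ : (w : ℝ) - (x₀ : ℝ) < ρ₀ := by
    have : (w : ℝ) ≤ (x₀ : ℝ) + ρ₀/2 := min_le_right _ _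
    linarith
  -- near point estimate
  have hnear : ∀ z : unitInterval, x₀ ≤ z → z ≤ w →
      edist (γ z) (γ x₀) ≤ ENNReal.ofReal (η/(12*(n+1))) := by
    intro z hz1 hz2
    have hd : dist z x₀ < ρ₀ := by
      rw [Subtype.dist_eq, Real.dist_eq, abs_of_nonneg (by exact sub_nonneg.mpr hz1)]
      have : (z : ℝ) ≤ (w : ℝ) := hz2
      linarith
    rw [edist_dist]
    exact ENNReal.ofReal_le_ofReal (le_of_lt (hball z hd))
  -- corrections
  set u'' : ℕ → unitInterval := fun i => max w (u i) with hu''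
  have hu''mono : Monotone u'' := fun i j hij => max_le_max le_rfl (hu hij)
  have hu''mem : ∀ i, u'' i ∈ Icc w (1 : unitInterval) :=
    fun i => ⟨le_max_left _ _, max_le le_one' le_one'⟩
  have hcorr : ∀ i, edist (γ (u'' i)) (γ (u i)) ≤ 2 * ENNReal.ofReal (η/(12*(n+1))) := by
    intro i
    rcases le_or_gt w (u i) with h | h
    · show edist (γ (max w (u i))) (γ (u i)) ≤ _
      rw [max_eq_right h]
      simp
    · show edist (γ (max w (u i))) (γ (u i)) ≤ _
      rw [max_eq_left h.le]
      calc edist (γ w) (γ (u i)) ≤ edist (γ w) (γ x₀) + edist (γ x₀) (γ (u i)) :=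
            edist_triangle _ _ _
        _ ≤ ENNReal.ofReal (η/(12*(n+1))) + ENNReal.ofReal (η/(12*(n+1))) := by
            refine add_le_add (hnear w hx₀w.le le_rfl) ?_
            rw [edist_comm]
            exact hnear (u i) (us i).1 h.le
        _ = 2 * ENNReal.ofReal (η/(12*(n+1))) := (two_mul _).symm
  -- sum comparison
  have hkey : (∑ i ∈ Finset.range n, edist (γ (u (i+1))) (γ (u i)))
      ≤ eVariationOn γ (Icc w 1) + c := by
    have h1 : ∀ i, edist (γ (u (i+1))) (γ (u i)) ≤
        edist (γ (u'' (i+1))) (γ (u'' i))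
        + (2 * ENNReal.ofReal (η/(12*(n+1))) + 2 * ENNReal.ofReal (η/(12*(n+1)))) := by
      intro i
      calc edist (γ (u (i+1))) (γ (u i))
          ≤ edist (γ (u (i+1))) (γ (u'' (i+1))) + edist (γ (u'' (i+1))) (γ (u'' i))
            + edist (γ (u'' i)) (γ (u i)) := edist_triangle4 _ _ _ _
        _ ≤ 2 * ENNReal.ofReal (η/(12*(n+1))) + edist (γ (u'' (i+1))) (γ (u'' i))
            + 2 * ENNReal.ofReal (η/(12*(n+1))) := by
            refine add_le_add (add_le_add ?_ le_rfl) (hcorr i)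
            rw [edist_comm]; exact hcorr (i+1)
        _ = _ := by ring
    calc (∑ i ∈ Finset.range n, edist (γ (u (i+1))) (γ (u i)))
        ≤ ∑ i ∈ Finset.range n, (edist (γ (u'' (i+1))) (γ (u'' i))
            + (2 * ENNReal.ofReal (η/(12*(n+1))) + 2 * ENNReal.ofReal (η/(12*(n+1))))) :=
          Finset.sum_le_sum fun i _ => h1 i
      _ = (∑ i ∈ Finset.range n, edist (γ (u'' (i+1))) (γ (u'' i)))
          + n * (4 * ENNReal.ofReal (η/(12*(n+1)))) := by
          rw [Finset.sum_add_distrib, Finset.sum_const, Finset.card_range]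
          congr 1
          rw [nsmul_eq_mul]
          congr 1
          ring
      _ ≤ eVariationOn γ (Icc w 1) + c := by
          refine add_le_add (eVariationOn.sum_le (f := γ) (n := n) hu''mono hu''mem) ?_
          rw [hc3]
          calc (n : ℝ≥0∞) * (4 * ENNReal.ofReal (η/(12*(n+1))))
              ≤ (n+1 : ℕ) * (4 * ENNReal.ofReal (η/(12*(n+1)))) := by
                gcongr
                exact_mod_cast Nat.le_succ n
            _ = ENNReal.ofReal ((n+1 : ℕ) * (4 * (η/(12*(n+1))))) := by
                rw [ENNReal.ofReal_mul (by positivity), ENNReal.ofReal_mul (by norm_num),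
                  ENNReal.ofReal_natCast]
                norm_num
            _ ≤ ENNReal.ofReal (η/3) := by
                apply ENNReal.ofReal_le_ofReal
                apply le_of_eq
                have hn1 : ((n:ℝ)+1) ≠ 0 := by positivity
                push_cast
                field_simp
                ring
  -- conclude
  have hVRle : VR ≤ eVariationOn γ (Icc w 1) + 2 * c := by
    have h2 : VR ≤ (∑ i ∈ Finset.range n, edist (γ (u (i+1))) (γ (u i))) + c :=
      tsub_le_iff_right.mp hsum.le
    calc VR ≤ (eVariationOn γ (Icc w 1) + c) + c := le_trans h2 (add_le_add hkey le_rfl)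
      _ = eVariationOn γ (Icc w 1) + 2 * c := by ring
  have hsplit : eVariationOn γ (Icc x₀ w) + eVariationOn γ (Icc w 1) = VR := by
    have := eVariationOn.Icc_add_Icc γ (le_of_lt hx₀w) (le_one' : w ≤ 1) (mem_univ w)
      (s := (univ : Set unitInterval))
    simpa using this
  have hw1top : eVariationOn γ (Icc w 1) ≠ ⊤ := by
    intro h
    exact hbv (top_le_iff.mp (h ▸ eVariationOn.mono γ (subset_univ _)))
  refine ⟨w, hx₀w, ?_⟩
  have : eVariationOn γ (Icc x₀ w) + eVariationOn γ (Icc w 1)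
      ≤ 2 * c + eVariationOn γ (Icc w 1) := by
    rw [hsplit]
    calc VR ≤ eVariationOn γ (Icc w 1) + 2 * c := hVRle
      _ = 2 * c + eVariationOn γ (Icc w 1) := add_comm _ _
  have h3 := (ENNReal.add_le_add_iff_right hw1top).mp this
  calc eVariationOn γ (Icc x₀ w) ≤ 2 * c := h3
    _ ≤ ENNReal.ofReal η := by
      rw [hc3, two_mul, ← ENNReal.ofReal_add (by positivity) (by positivity)]
      exact ENNReal.ofReal_le_ofReal (by linarith)


lemma symm_image_Icc (a b : unitInterval) :
    σ '' Icc a b = Icc (σ b) (σ a) := by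
  ext z
  constructor
  · rintro ⟨y, ⟨hy1, hy2⟩, rfl⟩
    constructor
    · rw [← Subtype.coe_le_coe] at hy2 ⊢
      simp only [unitInterval.coe_symm_eq]
      linarith
    · rw [← Subtype.coe_le_coe] at hy1 ⊢
      simp only [unitInterval.coe_symm_eq]
      linarith
  · rintro ⟨h1, h2⟩
    refine ⟨σ z, ⟨?_, ?_⟩, unitInterval.symm_symm z⟩
    · rw [← Subtype.coe_le_coe] at h2 ⊢
      simp only [unitInterval.coe_symm_eq] at h2 ⊢
      linarith
    · rw [← Subtype.coe_le_coe] at h1 ⊢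
      simp only [unitInterval.coe_symm_eq] at h1 ⊢
      linarith

lemma symm_antitone : Antitone (σ : unitInterval → unitInterval) := by
  intro a b hab
  rw [← Subtype.coe_le_coe] at hab ⊢
  simp only [unitInterval.coe_symm_eq]
  linarith

lemma small_var_left (γ : unitInterval → E) (hc : Continuous γ)
    (hbv : BoundedVariationOn γ Set.univ) (x₀ : unitInterval) (hx : 0 < x₀)
    {η : ℝ} (hη : 0 < η) :
    ∃ w : unitInterval, w < x₀ ∧ eVariationOn γ (Icc w x₀) ≤ ENNReal.ofReal η := by
  have hσc : Continuous (γ ∘ σ) := hc.comp continuous_symm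
  have hcomp : ∀ t : Set unitInterval, eVariationOn (γ ∘ σ) t = eVariationOn γ (σ '' t) :=
    fun t => eVariationOn.comp_eq_of_antitoneOn γ σ (symm_antitone.antitoneOn t)
  have hσbv : BoundedVariationOn (γ ∘ σ) Set.univ := by
    unfold BoundedVariationOn
    rw [hcomp univ]
    intro h
    apply hbv
    exact top_le_iff.mp (h ▸ eVariationOn.mono γ (subset_univ _))
  have hσx : σ x₀ < 1 := by
    rw [← Subtype.coe_lt_coe]
    simp only [unitInterval.coe_symm_eq]
    have h0 : (0:ℝ) < x₀ := hx
    have h1 : ((1 : unitInterval) : ℝ) = 1 := rfl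
    rw [h1]
    linarith
  obtain ⟨w', hw'1, hw'2⟩ := small_var_right (γ ∘ σ) hσc hσbv (σ x₀) hσx hη
  refine ⟨σ w', ?_, ?_⟩
  · rw [← Subtype.coe_lt_coe]
    have : (x₀ : ℝ) ≤ 1 := unitInterval.le_one'
    have hw : (σ x₀ : ℝ) < w' := hw'1
    simp only [unitInterval.coe_symm_eq] at hw ⊢
    linarith
  · have := hcomp (Icc (σ x₀) w')
    rw [symm_image_Icc, unitInterval.symm_symm] at this
    rw [← this]
    exact hw'2


section VarFun

variable (γ : unitInterval → E) (hbv : BoundedVariationOn γ Set.univ)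

/-- basic facts about v s := variationOnFromTo γ univ 0 s -/
lemma varFun_diff (hbv : BoundedVariationOn γ Set.univ) {x y : unitInterval} (hxy : x ≤ y) :
    variationOnFromTo γ Set.univ 0 y - variationOnFromTo γ Set.univ 0 x
      = (eVariationOn γ (Icc x y)).toReal := by
  have hlbv : LocallyBoundedVariationOn γ Set.univ := hbv.locallyBoundedVariationOn
  have :=
    variationOnFromTo.add hlbv (mem_univ (0 : unitInterval)) (mem_univ x) (mem_univ y)
  have h2 : variationOnFromTo γ Set.univ x y = (eVariationOn γ (Set.univ ∩ Icc x y)).toReal :=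
    variationOnFromTo.eq_of_le γ Set.univ hxy
  rw [univ_inter] at h2
  linarith

lemma varFun_mono (hbv : BoundedVariationOn γ Set.univ) :
    Monotone (fun s => variationOnFromTo γ Set.univ 0 s) := by
  have := variationOnFromTo.monotoneOn hbv.locallyBoundedVariationOn (mem_univ (0:unitInterval))
  exact monotoneOn_univ.mp this

lemma varFun_dist_le (hbv : BoundedVariationOn γ Set.univ) {x y : unitInterval} (hxy : x ≤ y) :
    dist (γ x) (γ y) ≤ variationOnFromTo γ Set.univ 0 y - variationOnFromTo γ Set.univ 0 x := by
  rw [varFun_diff γ hbv hxy]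
  have hfin : BoundedVariationOn γ (Icc x y) := hbv.mono (subset_univ _)
  have := hfin.dist_le (left_mem_Icc.mpr hxy) (right_mem_Icc.mpr hxy)
  exact this

lemma varFun_continuous (hc : Continuous γ) (hbv : BoundedVariationOn γ Set.univ) :
    Continuous (fun s => variationOnFromTo γ Set.univ 0 s) := by
  set v := fun s => variationOnFromTo γ Set.univ 0 s with hv
  have hmono : Monotone v := varFun_mono γ hbv
  rw [Metric.continuous_iff]
  intro x₀ ε hε
  have hη : 0 < ε/2 := by linarith
  -- right bound
  have hright : ∃ ρ > 0, ∀ x : unitInterval, (x:ℝ) < (x₀:ℝ) + ρ → v x ≤ v x₀ + ε/2 := by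
    rcases eq_or_lt_of_le (le_one' : x₀ ≤ 1) with h1 | h1
    · exact ⟨1, one_pos, fun x _ => le_trans (hmono (h1 ▸ le_one' : x ≤ x₀))
        (by linarith)⟩
    · obtain ⟨w, hw1, hw2⟩ := small_var_right γ hc hbv x₀ h1 hη
      refine ⟨(w:ℝ) - (x₀:ℝ), by simpa [sub_pos] using (Subtype.coe_lt_coe.mpr hw1), ?_⟩
      intro x hxw
      have hxle : x ≤ w := by
        rw [← Subtype.coe_le_coe]
        linarith
      have : v w - v x₀ ≤ ε/2 := by
        rw [hv]
        rw [varFun_diff γ hbv hw1.le]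
        exact ENNReal.toReal_le_of_le_ofReal hη.le hw2
      have := hmono hxle
      linarith
  -- left bound
  have hleft : ∃ ρ > 0, ∀ x : unitInterval, (x₀:ℝ) - ρ < (x:ℝ) → v x₀ - ε/2 ≤ v x := by
    rcases eq_or_lt_of_le (nonneg' : 0 ≤ x₀) with h1 | h1
    · refine ⟨1, one_pos, fun x _ => ?_⟩
      have : x₀ ≤ x := h1 ▸ nonneg'
      have := hmono this
      linarith
    · obtain ⟨w, hw1, hw2⟩ := small_var_left γ hc hbv x₀ h1 hη
      refine ⟨(x₀:ℝ) - (w:ℝ), by simpa [sub_pos] using (Subtype.coe_lt_coe.mpr hw1), ?_⟩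
      intro x hxw
      have hxle : w ≤ x := by
        rw [← Subtype.coe_le_coe]
        linarith
      have : v x₀ - v w ≤ ε/2 := by
        rw [hv, varFun_diff γ hbv hw1.le]
        exact ENNReal.toReal_le_of_le_ofReal hη.le hw2
      have := hmono hxle
      linarith
  obtain ⟨ρ₁, hρ₁, hr⟩ := hright
  obtain ⟨ρ₂, hρ₂, hl⟩ := hleft
  refine ⟨min ρ₁ ρ₂, lt_min hρ₁ hρ₂, fun x hx => ?_⟩
  rw [Subtype.dist_eq, Real.dist_eq] at hx
  have habs := abs_lt.mp hx
  have hm1 := min_le_left ρ₁ ρ₂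
  have hm2 := min_le_right ρ₁ ρ₂
  have hx1 : (x:ℝ) < (x₀:ℝ) + ρ₁ := by linarith [habs.1, habs.2]
  have hx2 : (x₀:ℝ) - ρ₂ < (x:ℝ) := by linarith [habs.1, habs.2]
  have b1 := hr x hx1
  have b2 := hl x hx2
  rw [Real.dist_eq, abs_lt]
  constructor <;> linarith

end VarFun

end VarCont

section SM
variable {E : Type*} [MetricSpace E]
lemma varFun_strictMono (γ : unitInterval → E) (hbv : BoundedVariationOn γ Set.univ)
    (hmono : Monotone (fun s => variationOnFromTo γ Set.univ 0 s))
    (hdiff : ∀ {x y : unitInterval}, x ≤ y →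
      variationOnFromTo γ Set.univ 0 y - variationOnFromTo γ Set.univ 0 x
        = (eVariationOn γ (Icc x y)).toReal)
    (hinj : LocallyInjective γ) :
    StrictMono (fun s => variationOnFromTo γ Set.univ 0 s) := by
  intro x y hxy
  set v := fun s => variationOnFromTo γ Set.univ 0 s with hv
  rcases lt_or_eq_of_le (hmono hxy.le) with h | h
  · exact h
  exfalso
  -- variation on Icc x y is zero
  have hfin : eVariationOn γ (Icc x y) ≠ ⊤ := fun h' =>
    hbv (top_le_iff.mp (h' ▸ eVariationOn.mono γ (subset_univ _)))
  have hz : eVariationOn γ (Icc x y) = 0 := by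
    have this := hdiff hxy.le
    have h' : variationOnFromTo γ Set.univ 0 x = variationOnFromTo γ Set.univ 0 y := h
    rw [← h'] at this
    simp only [sub_self] at this
    rcases (ENNReal.toReal_eq_zero_iff _).mp this.symm with h' | h'
    · exact h'
    · exact absurd h' hfin
  have hconst : ∀ z ∈ Icc x y, ∀ z' ∈ Icc x y, γ z = γ z' := by
    intro z hz1 z' hz2
    have := (eVariationOn.eq_zero_iff γ).mp hz z hz1 z' hz2
    exact edist_eq_zero.mp this
  -- midpoint
  have hxy' : (x:ℝ) < (y:ℝ) := hxy
  have hmmem : ((x:ℝ) + (y:ℝ))/2 ∈ Set.Icc (0:ℝ) 1 := by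
    constructor
    · have := nonneg (x := x); have := nonneg (x := y); linarith [x.2.1, y.2.1]
    · linarith [x.2.2, y.2.2]
  obtain ⟨m, hmval⟩ : ∃ m : unitInterval, (m:ℝ) = ((x:ℝ)+(y:ℝ))/2 := ⟨⟨_, hmmem⟩, rfl⟩
  have hxm : x ≤ m := by rw [← Subtype.coe_le_coe]; rw [hmval]; linarith
  have hmy : (m:ℝ) < y := by rw [hmval]; linarith
  obtain ⟨U, hU, hUinj⟩ := hinj m
  obtain ⟨ρ, hρ, hball⟩ := Metric.mem_nhds_iff.mp hU
  obtain ⟨δ', hδ'pos, hd1, hd2⟩ : ∃ d : ℝ, 0 < d ∧ d ≤ ρ/2 ∧ d ≤ ((y:ℝ) - (m:ℝ))/2 :=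
    ⟨min (ρ/2) (((y:ℝ) - (m:ℝ))/2), lt_min (by linarith) (by linarith),
      min_le_left _ _, min_le_right _ _⟩
  have hm'mem : (m:ℝ) + δ' ∈ Set.Icc (0:ℝ) 1 := by
    constructor
    · have := hmmem.1; rw [hmval]; linarith
    · have := y.2.2; linarith
  obtain ⟨m', hm'val⟩ : ∃ m' : unitInterval, (m':ℝ) = (m:ℝ) + δ' := ⟨⟨_, hm'mem⟩, rfl⟩
  have hmm' : m < m' := by rw [← Subtype.coe_lt_coe, hm'val]; linarith
  have hm'y : m' ≤ y := by
    rw [← Subtype.coe_le_coe, hm'val]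
    linarith
  have hmU : m ∈ U := hball (Metric.mem_ball_self hρ)
  have hm'U : m' ∈ U := by
    apply hball
    rw [Metric.mem_ball, Subtype.dist_eq, Real.dist_eq, hm'val]
    rw [show (m:ℝ) + δ' - (m:ℝ) = δ' by ring]
    rw [abs_of_nonneg (by linarith)]
    linarith
  have : γ m = γ m' := hconst m ⟨hxm, by rw [← Subtype.coe_le_coe]; exact hmy.le⟩
    m' ⟨le_trans hxm hmm'.le, hm'y⟩
  have := hUinj hmU hm'U this
  exact absurd this (ne_of_lt hmm')

-- homeomorphism fixing 0 is strictly monotone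
lemma homeo_strictMono (r : unitInterval ≃ₜ unitInterval) (h0 : r 0 = 0) :
    StrictMono (r : unitInterval → unitInterval) := by
  set f : ℝ → ℝ := fun x => ((r (Set.projIcc 0 1 zero_le_one x) : unitInterval) : ℝ) with hf
  have hfc : ContinuousOn f (Set.Icc 0 1) :=
    (continuous_subtype_val.comp (r.continuous.comp continuous_projIcc)).continuousOn
  have hproj : ∀ x : ℝ, ∀ hx : x ∈ Set.Icc (0:ℝ) 1, Set.projIcc 0 1 zero_le_one x = ⟨x, hx⟩ :=
    fun x hx => Set.projIcc_of_mem zero_le_one hx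
  have hfinj : Set.InjOn f (Set.Icc 0 1) := by
    intro a ha b hb hab
    rw [hf] at hab
    simp only at hab
    rw [hproj a ha, hproj b hb] at hab
    have := r.injective (Subtype.coe_injective hab)
    exact congrArg Subtype.val this
  have hp0 : Set.projIcc (0:ℝ) 1 zero_le_one 0 = (0 : unitInterval) := by
    apply Subtype.ext
    simp [Set.projIcc]
  have hf01 : f 0 ≤ f 1 := by
    have h1 : f 0 = ((r 0 : unitInterval) : ℝ) := by
      rw [hf]; simp only [hp0]
    have : f 0 = 0 := by rw [h1, h0]; rfl
    rw [this]
    exact (r _).2.1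
  have hsm : StrictMonoOn f (Set.Icc 0 1) :=
    ContinuousOn.strictMonoOn_of_injOn_Icc zero_le_one hf01 hfc hfinj
  intro a b hab
  have ha : (a:ℝ) ∈ Set.Icc (0:ℝ) 1 := a.2
  have hb : (b:ℝ) ∈ Set.Icc (0:ℝ) 1 := b.2
  have := hsm ha hb (Subtype.coe_lt_coe.mpr hab)
  rw [hf] at this
  simp only at this
  rw [hproj _ ha, hproj _ hb] at this
  rw [← Subtype.coe_lt_coe]
  simpa using this

end SM

section Geom2
lemma abs_sin_le_abs' (x : ℝ) : |Real.sin x| ≤ |x| := by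
  rcases eq_or_ne x 0 with h | h
  · simp [h]
  · exact (Real.abs_sin_lt_abs h).le

lemma abs_cos_sub_cos_le (a b : ℝ) : |Real.cos a - Real.cos b| ≤ |a - b| := by
  rw [Real.cos_sub_cos, abs_mul, abs_mul]
  have h1 : |Real.sin ((a+b)/2)| ≤ 1 := Real.abs_sin_le_one _
  have h2 : |Real.sin ((a-b)/2)| ≤ |a-b|/2 := by
    have := abs_sin_le_abs' ((a-b)/2)
    rwa [abs_div, abs_two] at this
  have h3 : |(-2 : ℝ)| = 2 := by norm_num
  rw [h3]
  nlinarith [abs_nonneg (Real.sin ((a+b)/2)), abs_nonneg (Real.sin ((a-b)/2)), abs_nonneg (a-b)]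

lemma abs_sin_sub_sin_le (a b : ℝ) : |Real.sin a - Real.sin b| ≤ |a - b| := by
  rw [Real.sin_sub_sin, abs_mul, abs_mul]
  have h1 : |Real.cos ((a+b)/2)| ≤ 1 := Real.abs_cos_le_one _
  have h2 : |Real.sin ((a-b)/2)| ≤ |a-b|/2 := by
    have := abs_sin_le_abs' ((a-b)/2)
    rwa [abs_div, abs_two] at this
  have h3 : |(2 : ℝ)| = 2 := by norm_num
  rw [h3]
  nlinarith [abs_nonneg (Real.cos ((a+b)/2)), abs_nonneg (Real.sin ((a-b)/2)), abs_nonneg (a-b)]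

variable {n : ℕ}

lemma euc_single_sub (i : Fin n) (a b : ℝ) :
    EuclideanSpace.single i a - EuclideanSpace.single i b = EuclideanSpace.single i (a - b) := by
  ext j
  rcases eq_or_ne j i with h | h
  · simp [EuclideanSpace.single_apply, h]
  · simp [EuclideanSpace.single_apply, h]

lemma euc_single_continuous (i : Fin n) :
    Continuous (fun a : ℝ => EuclideanSpace.single (𝕜 := ℝ) i a) := by
  have h : (fun a : ℝ => EuclideanSpace.single (𝕜 := ℝ) i a)
      = fun a : ℝ => a • EuclideanSpace.single (𝕜 := ℝ) i (1:ℝ) := by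
    funext a
    ext j
    rcases eq_or_ne j i with h | h
    · simp [EuclideanSpace.single_apply, h]
    · simp [EuclideanSpace.single_apply, h]
  rw [h]
  exact continuous_id.smul continuous_const

noncomputable def Wc (i₀ i₁ : Fin n) (θ : ℝ) : EuclideanSpace ℝ (Fin n) :=
  EuclideanSpace.single i₀ (Real.cos θ) + EuclideanSpace.single i₁ (Real.sin θ)

lemma Wc_continuous (i₀ i₁ : Fin n) : Continuous (Wc i₀ i₁) := by
  unfold Wc
  exact ((euc_single_continuous i₀).comp Real.continuous_cos).add
    ((euc_single_continuous i₁).comp Real.continuous_sin)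

lemma Wc_apply₀ (i₀ i₁ : Fin n) (hne : i₀ ≠ i₁) (θ : ℝ) : Wc i₀ i₁ θ i₀ = Real.cos θ := by
  unfold Wc
  rw [PiLp.add_apply]
  simp [EuclideanSpace.single_apply, hne, Ne.symm hne]

lemma Wc_apply₁ (i₀ i₁ : Fin n) (hne : i₀ ≠ i₁) (θ : ℝ) : Wc i₀ i₁ θ i₁ = Real.sin θ := by
  unfold Wc
  rw [PiLp.add_apply]
  simp [EuclideanSpace.single_apply, hne, Ne.symm hne]

lemma Wc_norm_le (i₀ i₁ : Fin n) (θ : ℝ) : ‖Wc i₀ i₁ θ‖ ≤ 2 := by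
  unfold Wc
  calc ‖EuclideanSpace.single i₀ (Real.cos θ) + EuclideanSpace.single i₁ (Real.sin θ)‖
      ≤ ‖EuclideanSpace.single i₀ (Real.cos θ)‖ + ‖EuclideanSpace.single i₁ (Real.sin θ)‖ :=
        norm_add_le _ _
    _ = |Real.cos θ| + |Real.sin θ| := by
        rw [EuclideanSpace.norm_single, EuclideanSpace.norm_single, Real.norm_eq_abs,
          Real.norm_eq_abs]
    _ ≤ 2 := by
        have := Real.abs_cos_le_one θ
        have := Real.abs_sin_le_one θ
        linarith

lemma Wc_lip (i₀ i₁ : Fin n) (θ θ' : ℝ) : ‖Wc i₀ i₁ θ - Wc i₀ i₁ θ'‖ ≤ 2 * |θ - θ'| := by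
  have h1 : Wc i₀ i₁ θ - Wc i₀ i₁ θ' =
      EuclideanSpace.single i₀ (Real.cos θ - Real.cos θ')
      + EuclideanSpace.single i₁ (Real.sin θ - Real.sin θ') := by
    unfold Wc
    rw [← euc_single_sub, ← euc_single_sub]
    abel
  rw [h1]
  calc ‖EuclideanSpace.single i₀ (Real.cos θ - Real.cos θ')
      + EuclideanSpace.single i₁ (Real.sin θ - Real.sin θ')‖
      ≤ ‖EuclideanSpace.single i₀ (Real.cos θ - Real.cos θ')‖
        + ‖EuclideanSpace.single i₁ (Real.sin θ - Real.sin θ')‖ := norm_add_le _ _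
    _ = |Real.cos θ - Real.cos θ'| + |Real.sin θ - Real.sin θ'| := by
        rw [EuclideanSpace.norm_single, EuclideanSpace.norm_single, Real.norm_eq_abs,
          Real.norm_eq_abs]
    _ ≤ |θ - θ'| + |θ - θ'| := add_le_add (abs_cos_sub_cos_le θ θ') (abs_sin_sub_sin_le θ θ')
    _ = 2 * |θ - θ'| := by ring

lemma Wc_chord_lower (i₀ i₁ : Fin n) (hne : i₀ ≠ i₁) (θ θ' : ℝ) :
    2 * |Real.sin ((θ - θ')/2)| ≤ ‖Wc i₀ i₁ θ - Wc i₀ i₁ θ'‖ := by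
  obtain ⟨m, hm⟩ : ∃ m : ℝ, m = (θ + θ')/2 := ⟨_, rfl⟩
  obtain ⟨d, hd⟩ : ∃ d : ℝ, d = (θ - θ')/2 := ⟨_, rfl⟩
  set q : EuclideanSpace ℝ (Fin n) :=
    EuclideanSpace.single i₀ (-Real.sin m) + EuclideanSpace.single i₁ (Real.cos m) with hq
  have hqa₀ : q i₀ = -Real.sin m := by
    rw [hq, PiLp.add_apply]
    simp [EuclideanSpace.single_apply, hne, Ne.symm hne]
  have hqa₁ : q i₁ = Real.cos m := by
    rw [hq, PiLp.add_apply]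
    simp [EuclideanSpace.single_apply, hne, Ne.symm hne]
  have hinner : ∀ ψ : ℝ, ⟪q, Wc i₀ i₁ ψ⟫ = Real.sin (ψ - m) := by
    intro ψ
    rw [hq, inner_add_left, EuclideanSpace.inner_single_left, EuclideanSpace.inner_single_left]
    rw [Wc_apply₀ i₀ i₁ hne, Wc_apply₁ i₀ i₁ hne]
    simp only [starRingEnd_apply, star_trivial]
    rw [Real.sin_sub]
    ring
  have hqq : ⟪q, q⟫ = 1 := by
    rw [hq, inner_add_left, EuclideanSpace.inner_single_left, EuclideanSpace.inner_single_left]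
    rw [← hq, hqa₀, hqa₁]
    simp only [starRingEnd_apply, star_trivial]
    nlinarith [Real.sin_sq_add_cos_sq m]
  have hqnorm : ‖q‖ = 1 := by
    have h1 : ⟪q, q⟫ = ‖q‖ ^ 2 := real_inner_self_eq_norm_sq q
    have h2 : ‖q‖ ^ 2 = 1 := by rw [← h1, hqq]
    nlinarith [norm_nonneg q]
  have hz : ⟪q, Wc i₀ i₁ θ - Wc i₀ i₁ θ'⟫ = 2 * Real.sin d := by
    rw [inner_sub_right, hinner, hinner]
    have e1 : θ - m = d := by rw [hm, hd]; ring
    have e2 : θ' - m = -d := by rw [hm, hd]; ring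
    rw [e1, e2, Real.sin_neg]
    ring
  have habs := abs_real_inner_le_norm q (Wc i₀ i₁ θ - Wc i₀ i₁ θ')
  rw [hz, hqnorm, one_mul] at habs
  rw [← hd]
  calc 2 * |Real.sin d| = |2 * Real.sin d| := by rw [abs_mul]; norm_num
    _ ≤ _ := habs


end Geom2

end AuxLemmas

set_option maxHeartbeats 1600000

section DFPHelpers

variable {E : Type*} [PseudoEMetricSpace E]

lemma dFP_le_iSup (φ ψ : unitInterval → E) : dFP φ ψ ≤ ⨆ t, edist (φ t) (ψ t) := by
  have := iInf_le (fun r : {r : unitInterval ≃ₜ unitInterval // r 0 = 0} =>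
    ⨆ t : unitInterval, edist (φ t) (ψ (r.1 t))) ⟨Homeomorph.refl _, rfl⟩
  simpa [dFP] using this

lemma dFP_lt_of_forall_dist_le {E' : Type*} [PseudoMetricSpace E'] (φ ψ : unitInterval → E')
    {D δ : ℝ} (h : ∀ s, dist (φ s) (ψ s) ≤ D) (hD : D < δ) (hδ : 0 < δ) :
    dFP φ ψ < ENNReal.ofReal δ := by
  refine lt_of_le_of_lt (dFP_le_iSup φ ψ) ?_
  refine lt_of_le_of_lt (iSup_le fun s => ?_) (ENNReal.ofReal_lt_ofReal_iff hδ |>.mpr hD)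
  rw [edist_dist]
  exact ENNReal.ofReal_le_ofReal (h s)

lemma dFP_comp_homeo_zero (ψ : unitInterval → E)
    (r : {r : unitInterval ≃ₜ unitInterval // r 0 = 0}) :
    dFP (fun s => ψ (r.1 s)) ψ = 0 := by
  refine le_antisymm ?_ zero_le
  refine le_trans (iInf_le _ r) ?_
  simp [edist_self]

end DFPHelpers

/-- For n ≥ 2, metric balls in the space of immersed rectifiable paths in ℝⁿ
under the path Fréchet distance are path-connected. -/
theorem immersed_path_balls_path_connected (n : ℕ) (hn : 2 ≤ n)
    (δ : ℝ) (hδ : 0 < δ)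
    (α β₁ β₂ : unitInterval → EuclideanSpace ℝ (Fin n))
    (hαc : Continuous α) (hαr : Rectifiable α) (hαi : LocallyInjective α)
    (hβ₁c : Continuous β₁) (hβ₁r : Rectifiable β₁) (hβ₁i : LocallyInjective β₁)
    (hβ₂c : Continuous β₂) (hβ₂r : Rectifiable β₂) (hβ₂i : LocallyInjective β₂)
    (hd₁ : dFP α β₁ < ENNReal.ofReal δ) (hd₂ : dFP α β₂ < ENNReal.ofReal δ) :
    ∃ Γ : unitInterval → unitInterval → EuclideanSpace ℝ (Fin n),
      (∀ t, Continuous (Γ t) ∧ Rectifiable (Γ t) ∧ LocallyInjective (Γ t)) ∧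
      dFP (Γ 0) β₁ = 0 ∧ dFP (Γ 1) β₂ = 0 ∧
      (∀ t : unitInterval, ∀ ε : ℝ, 0 < ε → ∃ δ' : ℝ, 0 < δ' ∧
        ∀ s : unitInterval, |(s : ℝ) - (t : ℝ)| < δ' →
          dFP (Γ s) (Γ t) < ENNReal.ofReal ε) ∧
      (∀ t : unitInterval, dFP α (Γ t) < ENNReal.ofReal δ) := by
  classical
  obtain ⟨r₁, hr₁⟩ := iInf_lt_iff.mp hd₁
  obtain ⟨r₂, hr₂⟩ := iInf_lt_iff.mp hd₂
  set A : unitInterval → EuclideanSpace ℝ (Fin n) := fun s => β₁ (r₁.1 s) with hAdef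
  set B : unitInterval → EuclideanSpace ℝ (Fin n) := fun s => β₂ (r₂.1 s) with hBdef
  have hr₁m : Monotone (r₁.1 : unitInterval → unitInterval) :=
    (homeo_strictMono r₁.1 r₁.2).monotone
  have hr₂m : Monotone (r₂.1 : unitInterval → unitInterval) :=
    (homeo_strictMono r₂.1 r₂.2).monotone
  have hAc : Continuous A := hβ₁c.comp r₁.1.continuous
  have hBc : Continuous B := hβ₂c.comp r₂.1.continuous
  have hAbv : BoundedVariationOn A Set.univ := by
    have hcomp := eVariationOn.comp_eq_of_monotoneOn β₁ (r₁.1 : unitInterval → unitInterval)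
      (hr₁m.monotoneOn Set.univ)
    have himg : (r₁.1 : unitInterval → unitInterval) '' Set.univ = Set.univ := by
      rw [Set.image_univ]; exact r₁.1.surjective.range_eq
    show eVariationOn (β₁ ∘ (r₁.1 : unitInterval → unitInterval)) Set.univ ≠ ⊤
    rw [hcomp, himg]
    exact hβ₁r
  have hBbv : BoundedVariationOn B Set.univ := by
    have hcomp := eVariationOn.comp_eq_of_monotoneOn β₂ (r₂.1 : unitInterval → unitInterval)
      (hr₂m.monotoneOn Set.univ)
    have himg : (r₂.1 : unitInterval → unitInterval) '' Set.univ = Set.univ := by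
      rw [Set.image_univ]; exact r₂.1.surjective.range_eq
    show eVariationOn (β₂ ∘ (r₂.1 : unitInterval → unitInterval)) Set.univ ≠ ⊤
    rw [hcomp, himg]
    exact hβ₂r
  have hAinj : LocallyInjective A := by
    intro x
    obtain ⟨U, hU, hUinj⟩ := hβ₁i (r₁.1 x)
    refine ⟨(r₁.1 : unitInterval → unitInterval) ⁻¹' U,
      r₁.1.continuous.continuousAt.preimage_mem_nhds hU, ?_⟩
    intro p hp q hq hpq
    exact r₁.1.injective (hUinj hp hq hpq)
  have hBinj : LocallyInjective B := by
    intro x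
    obtain ⟨U, hU, hUinj⟩ := hβ₂i (r₂.1 x)
    refine ⟨(r₂.1 : unitInterval → unitInterval) ⁻¹' U,
      r₂.1.continuous.continuousAt.preimage_mem_nhds hU, ?_⟩
    intro p hp q hq hpq
    exact r₂.1.injective (hUinj hp hq hpq)
  -- distance bounds
  have hfin₁ : (⨆ t, edist (α t) (β₁ (r₁.1 t))) ≠ ⊤ := ne_top_of_lt hr₁
  have hfin₂ : (⨆ t, edist (α t) (β₂ (r₂.1 t))) ≠ ⊤ := ne_top_of_lt hr₂
  obtain ⟨d₁, hd₁def⟩ : ∃ d : ℝ, d = (⨆ t, edist (α t) (β₁ (r₁.1 t))).toReal := ⟨_, rfl⟩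
  obtain ⟨d₂, hd₂def⟩ : ∃ d : ℝ, d = (⨆ t, edist (α t) (β₂ (r₂.1 t))).toReal := ⟨_, rfl⟩
  have hd₁δ : d₁ < δ := by
    rw [hd₁def]; exact (ENNReal.lt_ofReal_iff_toReal_lt hfin₁).mp hr₁
  have hd₂δ : d₂ < δ := by
    rw [hd₂def]; exact (ENNReal.lt_ofReal_iff_toReal_lt hfin₂).mp hr₂
  have hd₁nn : 0 ≤ d₁ := hd₁def ▸ ENNReal.toReal_nonneg
  have hd₂nn : 0 ≤ d₂ := hd₂def ▸ ENNReal.toReal_nonneg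
  have hdistA : ∀ s, dist (α s) (A s) ≤ d₁ := by
    intro s
    have h := le_iSup (fun t => edist (α t) (β₁ (r₁.1 t))) s
    have h2 := ENNReal.toReal_mono hfin₁ h
    rw [edist_dist, ENNReal.toReal_ofReal dist_nonneg] at h2
    rw [hd₁def]
    exact h2
  have hdistB : ∀ s, dist (α s) (B s) ≤ d₂ := by
    intro s
    have h := le_iSup (fun t => edist (α t) (β₂ (r₂.1 t))) s
    have h2 := ENNReal.toReal_mono hfin₂ h
    rw [edist_dist, ENNReal.toReal_ofReal dist_nonneg] at h2
    rw [hd₂def]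
    exact h2
  obtain ⟨d, hdd₁, hdd₂, hdnn, hdδ⟩ : ∃ d : ℝ, d₁ ≤ d ∧ d₂ ≤ d ∧ 0 ≤ d ∧ d < δ :=
    ⟨max d₁ d₂, le_max_left _ _, le_max_right _ _, le_trans hd₁nn (le_max_left _ _),
      max_lt hd₁δ hd₂δ⟩
  -- variation functions
  set vA : unitInterval → ℝ := fun s => variationOnFromTo A Set.univ 0 s with hvAdef
  set vB : unitInterval → ℝ := fun s => variationOnFromTo B Set.univ 0 s with hvBdef
  have hvAmono : Monotone vA := varFun_mono A hAbv
  have hvBmono : Monotone vB := varFun_mono B hBbv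
  have hvAcont : Continuous vA := varFun_continuous A hAc hAbv
  have hvBcont : Continuous vB := varFun_continuous B hBc hBbv
  have hvAsm : StrictMono vA :=
    varFun_strictMono A hAbv hvAmono (fun hxy => varFun_diff A hAbv hxy) hAinj
  have hvBsm : StrictMono vB :=
    varFun_strictMono B hBbv hvBmono (fun hxy => varFun_diff B hBbv hxy) hBinj
  have hvA0 : vA 0 = 0 := variationOnFromTo.self A Set.univ 0
  have hvB0 : vB 0 = 0 := variationOnFromTo.self B Set.univ 0
  have hvAd : ∀ {x y : unitInterval}, x ≤ y → dist (A x) (A y) ≤ vA y - vA x :=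
    fun hxy => varFun_dist_le A hAbv hxy
  have hvBd : ∀ {x y : unitInterval}, x ≤ y → dist (B x) (B y) ≤ vB y - vB x :=
    fun hxy => varFun_dist_le B hBbv hxy
  have h01 : (0 : unitInterval) < 1 := by
    rw [← Subtype.coe_lt_coe]; norm_num
  obtain ⟨V, hVdef, hVpos⟩ : ∃ V : ℝ, V = vA 1 + vB 1 ∧ 0 < V := by
    refine ⟨vA 1 + vB 1, rfl, ?_⟩
    have h1 : 0 < vA 1 := by
      have := hvAsm h01
      rw [hvA0] at this
      exact this
    have h2 : 0 ≤ vB 1 := by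
      have := hvBmono h01.le
      rw [hvB0] at this
      exact this
    linarith
  set ℓ : unitInterval → ℝ := fun s => (vA s + vB s) / V with hℓdef
  have hℓcont : Continuous ℓ := (hvAcont.add hvBcont).div_const V
  have hℓmono : Monotone ℓ := fun x y h => by
    have h1 := hvAmono h
    have h2 := hvBmono h
    show (vA x + vB x) / V ≤ (vA y + vB y) / V
    gcongr
  have hℓsm : StrictMono ℓ := fun x y h => by
    have h1 := hvAsm h
    have h2 := hvBmono h.le
    show (vA x + vB x) / V < (vA y + vB y) / V
    have hlt : vA x + vB x < vA y + vB y := by linarith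
    exact (div_lt_div_iff_of_pos_right hVpos).mpr hlt
  have hℓ0 : ℓ 0 = 0 := by
    show (vA 0 + vB 0) / V = 0
    rw [hvA0, hvB0]
    simp
  have hℓ1 : ℓ 1 = 1 := by
    show (vA 1 + vB 1) / V = 1
    rw [← hVdef]
    field_simp
  have hℓnn : ∀ s, 0 ≤ ℓ s := fun s => by
    have := hℓmono (nonneg' : 0 ≤ s)
    rw [hℓ0] at this
    exact this
  have hℓle1 : ∀ s, ℓ s ≤ 1 := fun s => by
    have := hℓmono (le_one' : s ≤ 1)
    rw [hℓ1] at this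
    exact this
  have hchord : ∀ {x y : unitInterval}, x ≤ y →
      dist (A x) (A y) + dist (B x) (B y) ≤ V * (ℓ y - ℓ x) := by
    intro x y hxy
    have h1 := hvAd hxy
    have h2 := hvBd hxy
    have h3 : V * (ℓ y - ℓ x) = (vA y + vB y) - (vA x + vB x) := by
      show V * ((vA y + vB y)/V - (vA x + vB x)/V) = _
      field_simp
    rw [h3]
    linarith
  -- parameters
  obtain ⟨ε, hεdef, hεpos⟩ : ∃ ε : ℝ, ε = (δ - d)/2 ∧ 0 < ε :=
    ⟨(δ - d)/2, rfl, by linarith⟩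
  obtain ⟨C, hCdef, hCpos, hεC⟩ : ∃ C : ℝ, C = V / ε ∧ 0 < C ∧ ε * C = V :=
    ⟨V / ε, rfl, div_pos hVpos hεpos, by field_simp⟩
  obtain ⟨i₀, hi₀⟩ : ∃ i : Fin n, (i : ℕ) = 0 := ⟨⟨0, by omega⟩, rfl⟩
  obtain ⟨i₁, hi₁⟩ : ∃ i : Fin n, (i : ℕ) = 1 := ⟨⟨1, by omega⟩, rfl⟩
  have hne : i₀ ≠ i₁ := by
    intro h
    rw [h] at hi₀
    omega
  -- the family
  set ut : unitInterval → ℝ := fun t => (t : ℝ) * (1 - (t : ℝ)) with hutdef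
  set aa : unitInterval → ℝ := fun t => ε * ut t with haadef
  set θf : unitInterval → unitInterval → ℝ :=
    fun t s => (2 * Real.pi * C / ut t) * ℓ s with hθfdef
  set Γ : unitInterval → unitInterval → EuclideanSpace ℝ (Fin n) := fun t s =>
    (1 - (t : ℝ)) • A s + (t : ℝ) • B s + aa t • Wc i₀ i₁ (θf t s) with hΓdef
  have hutnn : ∀ t, 0 ≤ ut t := fun t =>
    mul_nonneg t.2.1 (by linarith [t.2.2])
  have hutle : ∀ t, ut t ≤ 1/4 := fun t => by
    show (t:ℝ) * (1 - (t:ℝ)) ≤ 1/4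
    nlinarith [sq_nonneg ((t:ℝ) - 1/2)]
  have haann : ∀ t, 0 ≤ aa t := fun t => mul_nonneg hεpos.le (hutnn t)
  have hθnn : ∀ t, 0 ≤ 2 * Real.pi * C / ut t := fun t =>
    div_nonneg (by positivity) (hutnn t)
  have hPnorm : ∀ t s, ‖aa t • Wc i₀ i₁ (θf t s)‖ ≤ 2 * aa t := by
    intro t s
    rw [norm_smul, Real.norm_eq_abs, abs_of_nonneg (haann t)]
    calc aa t * ‖Wc i₀ i₁ (θf t s)‖ ≤ aa t * 2 :=
      mul_le_mul_of_nonneg_left (Wc_norm_le i₀ i₁ _) (haann t)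
    _ = 2 * aa t := by ring
  -- main pointwise bound
  have hmain : ∀ t s, dist (α s) (Γ t s) ≤ d + ε := by
    intro t s
    have hdecomp : α s - Γ t s =
        ((1 - (t:ℝ)) • (α s - A s) + (t:ℝ) • (α s - B s)) - aa t • Wc i₀ i₁ (θf t s) := by
      show α s - ((1 - (t : ℝ)) • A s + (t : ℝ) • B s + aa t • Wc i₀ i₁ (θf t s)) = _
      module
    rw [dist_eq_norm, hdecomp]
    have ht0 : 0 ≤ (t:ℝ) := t.2.1
    have ht1 : (t:ℝ) ≤ 1 := t.2.2
    calc ‖((1 - (t:ℝ)) • (α s - A s) + (t:ℝ) • (α s - B s)) - aa t • Wc i₀ i₁ (θf t s)‖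
        ≤ ‖(1 - (t:ℝ)) • (α s - A s) + (t:ℝ) • (α s - B s)‖ + ‖aa t • Wc i₀ i₁ (θf t s)‖ :=
          norm_sub_le _ _
      _ ≤ (‖(1 - (t:ℝ)) • (α s - A s)‖ + ‖(t:ℝ) • (α s - B s)‖) + 2 * aa t :=
          add_le_add (norm_add_le _ _) (hPnorm t s)
      _ = ((1 - (t:ℝ)) * ‖α s - A s‖ + (t:ℝ) * ‖α s - B s‖) + 2 * aa t := by
          rw [norm_smul, norm_smul, Real.norm_eq_abs, Real.norm_eq_abs,
            abs_of_nonneg (by linarith), abs_of_nonneg ht0]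
      _ ≤ ((1 - (t:ℝ)) * d + (t:ℝ) * d) + 2 * (ε * (1/4)) := by
          have hA' : ‖α s - A s‖ ≤ d := by
            rw [← dist_eq_norm]; exact le_trans (hdistA s) hdd₁
          have hB' : ‖α s - B s‖ ≤ d := by
            rw [← dist_eq_norm]; exact le_trans (hdistB s) hdd₂
          have haa' : aa t ≤ ε * (1/4) := by
            rw [haadef]
            exact mul_le_mul_of_nonneg_left (hutle t) hεpos.le
          have h1 : (1 - (t:ℝ)) * ‖α s - A s‖ ≤ (1 - (t:ℝ)) * d :=
            mul_le_mul_of_nonneg_left hA' (by linarith)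
          have h2 : (t:ℝ) * ‖α s - B s‖ ≤ (t:ℝ) * d :=
            mul_le_mul_of_nonneg_left hB' ht0
          linarith
      _ ≤ d + ε := by ring_nf; linarith
  -- continuity of each Γ t
  have hΓcont : ∀ t, Continuous (Γ t) := by
    intro t
    apply Continuous.add
    · exact (hAc.const_smul (1 - (t:ℝ))).add (hBc.const_smul (t:ℝ))
    · exact (((Wc_continuous i₀ i₁).comp (continuous_const.mul hℓcont :
        Continuous fun s => 2 * Real.pi * C / ut t * ℓ s)).const_smul (aa t) : _)
  -- rectifiability of each Γ t
  have hIccU : Set.Icc (0 : unitInterval) 1 = Set.univ := by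
    ext z
    simp [z.2.1, z.2.2, nonneg', le_one']
  have hΓbv : ∀ t, Rectifiable (Γ t) := by
    intro t
    have ht0 : 0 ≤ (t:ℝ) := t.2.1
    have ht1 : (t:ℝ) ≤ 1 := t.2.2
    have hvar1 : eVariationOn (fun s => (1 - (t:ℝ)) • A s) Set.univ ≤ eVariationOn A Set.univ := by
      apply eVariationOn_le_of_edist_le
      intro x _ y _
      rw [edist_dist, edist_dist, dist_smul₀]
      apply ENNReal.ofReal_le_ofReal
      rw [Real.norm_eq_abs, abs_of_nonneg (by linarith)]
      exact mul_le_of_le_one_left dist_nonneg (by linarith)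
    have hvar2 : eVariationOn (fun s => (t:ℝ) • B s) Set.univ ≤ eVariationOn B Set.univ := by
      apply eVariationOn_le_of_edist_le
      intro x _ y _
      rw [edist_dist, edist_dist, dist_smul₀]
      apply ENNReal.ofReal_le_ofReal
      rw [Real.norm_eq_abs, abs_of_nonneg ht0]
      exact mul_le_of_le_one_left dist_nonneg ht1
    set g : unitInterval → ℝ := fun s => (aa t * (2 * (2 * Real.pi * C / ut t))) * ℓ s with hgdef
    have hgmono : Monotone g := by
      intro x y h
      have hxy := hℓmono h
      apply mul_le_mul_of_nonneg_left hxy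
      exact mul_nonneg (haann t) (mul_nonneg (by norm_num) (hθnn t))
    have hvar3 : eVariationOn (fun s => aa t • Wc i₀ i₁ (θf t s)) Set.univ
        ≤ eVariationOn g Set.univ := by
      apply eVariationOn_le_of_edist_le
      intro x _ y _
      rw [edist_dist, edist_dist, dist_smul₀]
      apply ENNReal.ofReal_le_ofReal
      rw [Real.norm_eq_abs, abs_of_nonneg (haann t), Real.dist_eq]
      have h1 : dist (Wc i₀ i₁ (θf t x)) (Wc i₀ i₁ (θf t y)) ≤ 2 * |θf t x - θf t y| := by
        rw [dist_eq_norm]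
        exact Wc_lip i₀ i₁ _ _
      have h2 : |θf t x - θf t y| = (2 * Real.pi * C / ut t) * |ℓ x - ℓ y| := by
        show |(2 * Real.pi * C / ut t) * ℓ x - (2 * Real.pi * C / ut t) * ℓ y| = _
        rw [← mul_sub, abs_mul, abs_of_nonneg (hθnn t)]
      have h3 : |g x - g y| = (aa t * (2 * (2 * Real.pi * C / ut t))) * |ℓ x - ℓ y| := by
        show |(aa t * (2 * (2 * Real.pi * C / ut t))) * ℓ x
          - (aa t * (2 * (2 * Real.pi * C / ut t))) * ℓ y| = _
        rw [← mul_sub, abs_mul, abs_of_nonneg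
          (mul_nonneg (haann t) (mul_nonneg (by norm_num) (hθnn t)))]
      rw [h3]
      calc aa t * dist (Wc i₀ i₁ (θf t x)) (Wc i₀ i₁ (θf t y))
          ≤ aa t * (2 * ((2 * Real.pi * C / ut t) * |ℓ x - ℓ y|)) := by
            apply mul_le_mul_of_nonneg_left ?_ (haann t)
            rw [← h2]
            exact h1
        _ = aa t * (2 * (2 * Real.pi * C / ut t)) * |ℓ x - ℓ y| := by ring
    have hgbv : eVariationOn g Set.univ ≠ ⊤ := by
      have := hgmono.monotoneOn Set.univ |>.eVariationOn_le (Set.mem_univ 0) (Set.mem_univ 1)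
      rw [hIccU, Set.univ_inter] at this
      exact ne_top_of_le_ne_top ENNReal.ofReal_ne_top this
    show eVariationOn (Γ t) Set.univ ≠ ⊤
    have hsplit : eVariationOn (Γ t) Set.univ ≤
        (eVariationOn A Set.univ + eVariationOn B Set.univ) + eVariationOn g Set.univ := by
      have e1 : eVariationOn (Γ t) Set.univ ≤
          eVariationOn (fun s => (1 - (t:ℝ)) • A s + (t:ℝ) • B s) Set.univ
          + eVariationOn (fun s => aa t • Wc i₀ i₁ (θf t s)) Set.univ :=
        eVariationOn_add_le _ _ _
      have e2 : eVariationOn (fun s => (1 - (t:ℝ)) • A s + (t:ℝ) • B s) Set.univ ≤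
          eVariationOn (fun s => (1 - (t:ℝ)) • A s) Set.univ
          + eVariationOn (fun s => (t:ℝ) • B s) Set.univ :=
        eVariationOn_add_le _ _ _
      calc eVariationOn (Γ t) Set.univ
          ≤ _ + _ := e1
        _ ≤ (eVariationOn A Set.univ + eVariationOn B Set.univ) + eVariationOn g Set.univ := by
          exact add_le_add (le_trans e2 (add_le_add hvar1 hvar2)) hvar3
    intro htop
    rw [htop] at hsplit
    have := top_le_iff.mp hsplit
    have hABtop : eVariationOn A Set.univ + eVariationOn B Set.univ ≠ ⊤ :=
      ENNReal.add_ne_top.mpr ⟨hAbv, hBbv⟩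
    exact (ENNReal.add_ne_top.mpr ⟨hABtop, hgbv⟩) this
  -- local injectivity of each Γ t
  have hut0cases : ∀ t : unitInterval, ut t = 0 → (t = 0 ∨ t = 1) := by
    intro t h
    rcases mul_eq_zero.mp h with h' | h'
    · left; exact Subtype.ext h'
    · right; apply Subtype.ext; show (t:ℝ) = 1; linarith
  have hΓ0 : Γ 0 = A := by
    funext s
    show (1 - ((0:unitInterval):ℝ)) • A s + ((0:unitInterval):ℝ) • B s
      + aa 0 • Wc i₀ i₁ (θf 0 s) = A s
    have h0 : ((0:unitInterval):ℝ) = 0 := rfl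
    have haa0 : aa 0 = 0 := by
      show ε * (((0:unitInterval):ℝ) * (1 - ((0:unitInterval):ℝ))) = 0
      rw [h0]; ring
    rw [h0, haa0]
    simp
  have hΓ1 : Γ 1 = B := by
    funext s
    show (1 - ((1:unitInterval):ℝ)) • A s + ((1:unitInterval):ℝ) • B s
      + aa 1 • Wc i₀ i₁ (θf 1 s) = B s
    have h1 : ((1:unitInterval):ℝ) = 1 := rfl
    have haa1 : aa 1 = 0 := by
      show ε * (((1:unitInterval):ℝ) * (1 - ((1:unitInterval):ℝ))) = 0
      rw [h1]; ring
    rw [h1, haa1]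
    simp
  -- local injectivity of each Γ t
  have hΓinj : ∀ t, LocallyInjective (Γ t) := by
    intro t
    rcases eq_or_lt_of_le (hutnn t) with hu0 | hu
    · rcases hut0cases t hu0.symm with h | h
      · rw [h, hΓ0]; exact hAinj
      · rw [h, hΓ1]; exact hBinj
    · intro x
      obtain ⟨ρ, hρdef, hρpos⟩ : ∃ ρ : ℝ, ρ = ut t / (4 * C) ∧ 0 < ρ :=
        ⟨ut t / (4 * C), rfl, by positivity⟩
      refine ⟨ℓ ⁻¹' Metric.ball (ℓ x) ρ,
        hℓcont.continuousAt.preimage_mem_nhds (Metric.ball_mem_nhds _ hρpos), ?_⟩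
      have hunz : ut t ≠ 0 := ne_of_gt hu
      have key : ∀ p q : unitInterval, p ∈ ℓ ⁻¹' Metric.ball (ℓ x) ρ →
          q ∈ ℓ ⁻¹' Metric.ball (ℓ x) ρ → p < q → Γ t p ≠ Γ t q := by
        intro p q hp hq hpq heq
        have hp' : |ℓ p - ℓ x| < ρ := by
          have := hp
          rwa [Set.mem_preimage, Metric.mem_ball, Real.dist_eq] at this
        have hq' : |ℓ q - ℓ x| < ρ := by
          have := hq
          rwa [Set.mem_preimage, Metric.mem_ball, Real.dist_eq] at this
        obtain ⟨Δ, hΔdef, hΔpos, hΔlt⟩ :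
            ∃ Δ : ℝ, Δ = ℓ q - ℓ p ∧ 0 < Δ ∧ Δ < ut t / (2 * C) := by
          refine ⟨ℓ q - ℓ p, rfl, sub_pos.mpr (hℓsm hpq), ?_⟩
          have h2ρ : 2 * ρ = ut t / (2 * C) := by
            rw [hρdef]; field_simp; ring
          have h1 := abs_lt.mp hp'
          have h2 := abs_lt.mp hq'
          linarith [h1.1, h1.2, h2.1, h2.2]
        -- sin bound
        have hhalf : (θf t p - θf t q) / 2 = -(Real.pi * C * Δ / ut t) := by
          show ((2 * Real.pi * C / ut t) * ℓ p - (2 * Real.pi * C / ut t) * ℓ q) / 2 = _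
          rw [show ℓ p = ℓ q - Δ by rw [hΔdef]; ring]
          field_simp
          ring
        have hxpos : 0 < Real.pi * C * Δ / ut t := by
          have := Real.pi_pos
          positivity
        have hxle : Real.pi * C * Δ / ut t ≤ Real.pi / 2 := by
          rw [div_le_iff₀ hu]
          have hCΔ : C * Δ ≤ ut t / 2 := by
            have hx := hΔlt
            rw [lt_div_iff₀ (by positivity : (0:ℝ) < 2 * C)] at hx
            linarith
          calc Real.pi * C * Δ = Real.pi * (C * Δ) := by ring
            _ ≤ Real.pi * (ut t / 2) :=
              mul_le_mul_of_nonneg_left hCΔ Real.pi_pos.le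
            _ = Real.pi / 2 * ut t := by ring
        have hsin : 2 * C * Δ / ut t ≤ |Real.sin ((θf t p - θf t q) / 2)| := by
          rw [hhalf]
          have habs : |(-(Real.pi * C * Δ / ut t))| = Real.pi * C * Δ / ut t := by
            rw [abs_neg, abs_of_pos hxpos]
          have := Real.mul_abs_le_abs_sin (x := -(Real.pi * C * Δ / ut t))
            (by rw [habs]; exact hxle)
          rw [habs] at this
          calc 2 * C * Δ / ut t = 2 / Real.pi * (Real.pi * C * Δ / ut t) := by
                field_simp
            _ ≤ _ := this
        have hWlow := Wc_chord_lower i₀ i₁ hne (θf t p) (θf t q)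
        have hW4 : 4 * C * Δ / ut t ≤ ‖Wc i₀ i₁ (θf t p) - Wc i₀ i₁ (θf t q)‖ := by
          calc 4 * C * Δ / ut t = 2 * (2 * C * Δ / ut t) := by ring
            _ ≤ 2 * |Real.sin ((θf t p - θf t q) / 2)| := by linarith
            _ ≤ _ := hWlow
        have hpert : 4 * V * Δ ≤ ‖aa t • (Wc i₀ i₁ (θf t p) - Wc i₀ i₁ (θf t q))‖ := by
          rw [norm_smul, Real.norm_eq_abs, abs_of_nonneg (haann t)]
          have haaval : aa t = ε * ut t := rfl
          calc 4 * V * Δ = (ε * ut t) * (4 * C * Δ / ut t) := by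
                rw [show (ε * ut t) * (4 * C * Δ / ut t) = (ε * C) * (4 * Δ) * (ut t / ut t) by
                  ring, div_self hunz, mul_one, hεC]
                ring
            _ ≤ (ε * ut t) * ‖Wc i₀ i₁ (θf t p) - Wc i₀ i₁ (θf t q)‖ := by
                apply mul_le_mul_of_nonneg_left hW4 (by positivity)
            _ = aa t * _ := by rw [haaval]
        have hbase : ‖(1 - (t:ℝ)) • (A p - A q) + (t:ℝ) • (B p - B q)‖ ≤ V * Δ := by
          have ht0 : 0 ≤ (t:ℝ) := t.2.1
          have ht1 : (t:ℝ) ≤ 1 := t.2.2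
          calc ‖(1 - (t:ℝ)) • (A p - A q) + (t:ℝ) • (B p - B q)‖
              ≤ ‖(1 - (t:ℝ)) • (A p - A q)‖ + ‖(t:ℝ) • (B p - B q)‖ := norm_add_le _ _
            _ = (1 - (t:ℝ)) * ‖A p - A q‖ + (t:ℝ) * ‖B p - B q‖ := by
                rw [norm_smul, norm_smul, Real.norm_eq_abs, Real.norm_eq_abs,
                  abs_of_nonneg (by linarith), abs_of_nonneg ht0]
            _ ≤ ‖A p - A q‖ + ‖B p - B q‖ := by
                have e1 : (1 - (t:ℝ)) * ‖A p - A q‖ ≤ ‖A p - A q‖ :=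
                  mul_le_of_le_one_left (norm_nonneg _) (by linarith)
                have e2 : (t:ℝ) * ‖B p - B q‖ ≤ ‖B p - B q‖ :=
                  mul_le_of_le_one_left (norm_nonneg _) ht1
                linarith
            _ = dist (A p) (A q) + dist (B p) (B q) := by
                rw [dist_eq_norm, dist_eq_norm]
            _ ≤ V * (ℓ q - ℓ p) := hchord hpq.le
            _ = V * Δ := by rw [hΔdef]
        have hdq : Γ t p - Γ t q =
            ((1 - (t:ℝ)) • (A p - A q) + (t:ℝ) • (B p - B q))
            + aa t • (Wc i₀ i₁ (θf t p) - Wc i₀ i₁ (θf t q)) := by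
          show ((1 - (t : ℝ)) • A p + (t : ℝ) • B p + aa t • Wc i₀ i₁ (θf t p))
            - ((1 - (t : ℝ)) • A q + (t : ℝ) • B q + aa t • Wc i₀ i₁ (θf t q)) = _
          module
        have hzero : ((1 - (t:ℝ)) • (A p - A q) + (t:ℝ) • (B p - B q))
            + aa t • (Wc i₀ i₁ (θf t p) - Wc i₀ i₁ (θf t q)) = 0 := by
          rw [← hdq, heq, sub_self]
        have hPeq : ‖aa t • (Wc i₀ i₁ (θf t p) - Wc i₀ i₁ (θf t q))‖
            = ‖(1 - (t:ℝ)) • (A p - A q) + (t:ℝ) • (B p - B q)‖ := by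
          have heqn : aa t • (Wc i₀ i₁ (θf t p) - Wc i₀ i₁ (θf t q))
              = -((1 - (t:ℝ)) • (A p - A q) + (t:ℝ) • (B p - B q)) := by
            rw [add_comm] at hzero
            exact add_eq_zero_iff_eq_neg.mp hzero
          rw [heqn, norm_neg]
        have hVΔ : 0 < V * Δ := mul_pos hVpos hΔpos
        linarith [hpert, hbase, hPeq.le, hPeq.ge, hVΔ]
      intro p hp q hq heq
      rcases lt_trichotomy p q with h | h | h
      · exact absurd heq (key p q hp hq h)
      · exact h
      · exact absurd heq.symm (key q p hq hp h)
  -- continuity in t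
  have hABnorm : ∀ s, ‖A s - B s‖ ≤ d₁ + d₂ := by
    intro s
    rw [← dist_eq_norm]
    calc dist (A s) (B s) ≤ dist (A s) (α s) + dist (α s) (B s) := dist_triangle _ _ _
      _ ≤ d₁ + d₂ := by
        rw [dist_comm]
        exact add_le_add (hdistA s) (hdistB s)
  have hdec : ∀ (t' t : unitInterval) (s : unitInterval), Γ t' s - Γ t s =
      ((t:ℝ) - (t':ℝ)) • (A s - B s)
      + ((aa t' - aa t) • Wc i₀ i₁ (θf t' s)
        + aa t • (Wc i₀ i₁ (θf t' s) - Wc i₀ i₁ (θf t s))) := by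
    intro t' t s
    show ((1 - (t' : ℝ)) • A s + (t' : ℝ) • B s + aa t' • Wc i₀ i₁ (θf t' s))
      - ((1 - (t : ℝ)) • A s + (t : ℝ) • B s + aa t • Wc i₀ i₁ (θf t s)) = _
    module
  have haadiff : ∀ t' t : unitInterval, |aa t' - aa t| ≤ ε * |(t':ℝ) - (t:ℝ)| := by
    intro t' t
    have heq : aa t' - aa t = ε * (((t':ℝ) - (t:ℝ)) * (1 - ((t':ℝ) + (t:ℝ)))) := by
      show ε * ((t':ℝ) * (1 - (t':ℝ))) - ε * ((t:ℝ) * (1 - (t:ℝ))) = _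
      ring
    rw [heq, abs_mul, abs_of_nonneg hεpos.le, abs_mul]
    have h1 : |1 - ((t':ℝ) + (t:ℝ))| ≤ 1 := by
      rw [abs_le]
      constructor
      · linarith [t'.2.2, t.2.2]
      · linarith [t'.2.1, t.2.1]
    exact mul_le_mul_of_nonneg_left
      (mul_le_of_le_one_right (abs_nonneg _) h1) hεpos.le
  have hutdiff : ∀ t' t : unitInterval, |ut t' - ut t| ≤ |(t':ℝ) - (t:ℝ)| := by
    intro t' t
    have heq : ut t' - ut t = ((t':ℝ) - (t:ℝ)) * (1 - ((t':ℝ) + (t:ℝ))) := by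
      show (t':ℝ) * (1 - (t':ℝ)) - (t:ℝ) * (1 - (t:ℝ)) = _
      ring
    rw [heq, abs_mul]
    have h1 : |1 - ((t':ℝ) + (t:ℝ))| ≤ 1 := by
      rw [abs_le]
      constructor
      · linarith [t'.2.2, t.2.2]
      · linarith [t'.2.1, t.2.1]
    exact mul_le_of_le_one_right (abs_nonneg _) h1
  have hcont_t : ∀ t : unitInterval, ∀ ε₀ : ℝ, 0 < ε₀ → ∃ δ' : ℝ, 0 < δ' ∧
      ∀ s : unitInterval, |(s : ℝ) - (t : ℝ)| < δ' →
        dFP (Γ s) (Γ t) < ENNReal.ofReal ε₀ := by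
    intro t ε₀ hε₀
    rcases eq_or_lt_of_le (hutnn t) with hu0 | hu
    · -- endpoint case : aa t = 0
      have haat : aa t = 0 := by
        show ε * ut t = 0
        rw [← hu0, mul_zero]
      obtain ⟨Q, hQdef, hQpos⟩ : ∃ Q : ℝ, Q = d₁ + d₂ + 2 * ε + 1 ∧ 0 < Q :=
        ⟨_, rfl, by linarith⟩
      refine ⟨ε₀ / (2 * Q), by positivity, ?_⟩
      intro s hs
      apply dFP_lt_of_forall_dist_le (D := ε₀ / 2) _ _ ?_ (by linarith) hε₀
      intro u
      rw [dist_eq_norm, hdec s t u]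
      have hb1 : ‖((t:ℝ) - (s:ℝ)) • (A u - B u)‖ ≤ |(s:ℝ) - (t:ℝ)| * (d₁ + d₂) := by
        rw [norm_smul, Real.norm_eq_abs, abs_sub_comm]
        exact mul_le_mul_of_nonneg_left (hABnorm u) (abs_nonneg _)
      have hb2 : ‖(aa s - aa t) • Wc i₀ i₁ (θf s u)‖ ≤ 2 * (ε * |(s:ℝ) - (t:ℝ)|) := by
        rw [norm_smul, Real.norm_eq_abs]
        calc |aa s - aa t| * ‖Wc i₀ i₁ (θf s u)‖ ≤ |aa s - aa t| * 2 :=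
              mul_le_mul_of_nonneg_left (Wc_norm_le _ _ _) (abs_nonneg _)
          _ ≤ (ε * |(s:ℝ) - (t:ℝ)|) * 2 := by
              have hax := haadiff s t
              linarith
          _ = 2 * (ε * |(s:ℝ) - (t:ℝ)|) := by ring
      have hb3 : ‖aa t • (Wc i₀ i₁ (θf s u) - Wc i₀ i₁ (θf t u))‖ = 0 := by
        rw [haat, zero_smul, norm_zero]
      calc ‖((t:ℝ) - (s:ℝ)) • (A u - B u)
            + ((aa s - aa t) • Wc i₀ i₁ (θf s u)
              + aa t • (Wc i₀ i₁ (θf s u) - Wc i₀ i₁ (θf t u)))‖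
          ≤ ‖((t:ℝ) - (s:ℝ)) • (A u - B u)‖
            + (‖(aa s - aa t) • Wc i₀ i₁ (θf s u)‖
              + ‖aa t • (Wc i₀ i₁ (θf s u) - Wc i₀ i₁ (θf t u))‖) :=
            le_trans (norm_add_le _ _) (by gcongr; exact norm_add_le _ _)
        _ ≤ |(s:ℝ) - (t:ℝ)| * (d₁ + d₂) + (2 * (ε * |(s:ℝ) - (t:ℝ)|) + 0) := by
            rw [hb3] at *
            exact add_le_add hb1 (by rw [hb3]; exact add_le_add hb2 le_rfl)
        _ = |(s:ℝ) - (t:ℝ)| * (Q - 1) := by rw [hQdef]; ring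
        _ ≤ (ε₀ / (2 * Q)) * Q := by
            have h1 : |(s:ℝ) - (t:ℝ)| * (Q - 1) ≤ (ε₀ / (2 * Q)) * (Q - 1) := by
              apply mul_le_mul_of_nonneg_right hs.le (by linarith)
            have h2 : (ε₀ / (2 * Q)) * (Q - 1) ≤ (ε₀ / (2 * Q)) * Q := by
              apply mul_le_mul_of_nonneg_left (by linarith) (by positivity)
            linarith
        _ = ε₀ / 2 := by field_simp
    · -- interior case
      have hunz : ut t ≠ 0 := ne_of_gt hu
      obtain ⟨Q, hQdef, hQpos⟩ : ∃ Q : ℝ,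
          Q = d₁ + d₂ + 2 * ε + 8 * Real.pi * ε * C / ut t + 1 ∧ 0 < Q := by
        refine ⟨_, rfl, ?_⟩
        have h8 : 0 ≤ 8 * Real.pi * ε * C / ut t :=
          div_nonneg (mul_nonneg (mul_nonneg (mul_nonneg (by norm_num) Real.pi_pos.le)
            hεpos.le) hCpos.le) (hutnn t)
        linarith
      refine ⟨min (ut t / 2) (ε₀ / (2 * Q)), by positivity, ?_⟩
      intro s hs
      have hs1 : |(s:ℝ) - (t:ℝ)| < ut t / 2 := lt_of_lt_of_le hs (min_le_left _ _)
      have hs2 : |(s:ℝ) - (t:ℝ)| < ε₀ / (2 * Q) := lt_of_lt_of_le hs (min_le_right _ _)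
      have hus : ut t / 2 < ut s := by
        have h1 := hutdiff s t
        have h2 := abs_lt.mp (lt_of_le_of_lt h1 hs1)
        linarith [h2.1, h2.2]
      apply dFP_lt_of_forall_dist_le (D := ε₀ / 2) _ _ ?_ (by linarith) hε₀
      intro u
      rw [dist_eq_norm, hdec s t u]
      have hb1 : ‖((t:ℝ) - (s:ℝ)) • (A u - B u)‖ ≤ |(s:ℝ) - (t:ℝ)| * (d₁ + d₂) := by
        rw [norm_smul, Real.norm_eq_abs, abs_sub_comm]
        exact mul_le_mul_of_nonneg_left (hABnorm u) (abs_nonneg _)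
      have hb2 : ‖(aa s - aa t) • Wc i₀ i₁ (θf s u)‖ ≤ 2 * (ε * |(s:ℝ) - (t:ℝ)|) := by
        rw [norm_smul, Real.norm_eq_abs]
        calc |aa s - aa t| * ‖Wc i₀ i₁ (θf s u)‖ ≤ |aa s - aa t| * 2 :=
              mul_le_mul_of_nonneg_left (Wc_norm_le _ _ _) (abs_nonneg _)
          _ ≤ (ε * |(s:ℝ) - (t:ℝ)|) * 2 := by
              have hax := haadiff s t
              linarith
          _ = 2 * (ε * |(s:ℝ) - (t:ℝ)|) := by ring
      have hθb : |θf s u - θf t u| ≤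
          4 * Real.pi * C * |(s:ℝ) - (t:ℝ)| / (ut t)^2 := by
        have hθeq : θf s u - θf t u
            = (2 * Real.pi * C * (ut t - ut s) / (ut s * ut t)) * ℓ u := by
          show (2 * Real.pi * C / ut s) * ℓ u - (2 * Real.pi * C / ut t) * ℓ u = _
          have hsnz : ut s ≠ 0 := ne_of_gt (by linarith)
          field_simp
        rw [hθeq, abs_mul]
        have hl : |ℓ u| ≤ 1 := by
          rw [abs_of_nonneg (hℓnn u)]
          exact hℓle1 u
        have hnum : |2 * Real.pi * C * (ut t - ut s)|
            ≤ 2 * Real.pi * C * |(s:ℝ) - (t:ℝ)| := by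
          rw [abs_mul, abs_of_nonneg (by positivity : (0:ℝ) ≤ 2 * Real.pi * C)]
          apply mul_le_mul_of_nonneg_left ?_ (by positivity)
          rw [abs_sub_comm]
          exact hutdiff s t
        have hden : (ut t)^2 / 2 ≤ ut s * ut t := by
          have hmul := mul_le_mul_of_nonneg_right hus.le hu.le
          have hsq : (ut t)^2 = ut t * ut t := sq (ut t)
          linarith
        have habs_den : |ut s * ut t| = ut s * ut t :=
          abs_of_pos (mul_pos (by linarith) hu)
        calc |2 * Real.pi * C * (ut t - ut s) / (ut s * ut t)| * |ℓ u|
            ≤ |2 * Real.pi * C * (ut t - ut s) / (ut s * ut t)| * 1 := by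
              apply mul_le_mul_of_nonneg_left hl (abs_nonneg _)
          _ = |2 * Real.pi * C * (ut t - ut s)| / (ut s * ut t) := by
              rw [mul_one, abs_div, habs_den]
          _ ≤ (2 * Real.pi * C * |(s:ℝ) - (t:ℝ)|) / ((ut t)^2 / 2) := by
              apply div_le_div₀ (by positivity) hnum (by positivity) hden
          _ = 4 * Real.pi * C * |(s:ℝ) - (t:ℝ)| / (ut t)^2 := by
              field_simp
              ring
      have hb3 : ‖aa t • (Wc i₀ i₁ (θf s u) - Wc i₀ i₁ (θf t u))‖
          ≤ (8 * Real.pi * ε * C / ut t) * |(s:ℝ) - (t:ℝ)| := by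
        rw [norm_smul, Real.norm_eq_abs, abs_of_nonneg (haann t)]
        have hW := Wc_lip i₀ i₁ (θf s u) (θf t u)
        have haaval : aa t = ε * ut t := rfl
        calc aa t * ‖Wc i₀ i₁ (θf s u) - Wc i₀ i₁ (θf t u)‖
            ≤ aa t * (2 * |θf s u - θf t u|) :=
              mul_le_mul_of_nonneg_left hW (haann t)
          _ ≤ aa t * (2 * (4 * Real.pi * C * |(s:ℝ) - (t:ℝ)| / (ut t)^2)) := by
              apply mul_le_mul_of_nonneg_left ?_ (haann t)
              linarith [hθb]
          _ = (ε * ut t) * (8 * Real.pi * C * |(s:ℝ) - (t:ℝ)| / (ut t)^2) := by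
              rw [haaval]; ring
          _ = (8 * Real.pi * ε * C / ut t) * |(s:ℝ) - (t:ℝ)| := by
              field_simp
      calc ‖((t:ℝ) - (s:ℝ)) • (A u - B u)
            + ((aa s - aa t) • Wc i₀ i₁ (θf s u)
              + aa t • (Wc i₀ i₁ (θf s u) - Wc i₀ i₁ (θf t u)))‖
          ≤ ‖((t:ℝ) - (s:ℝ)) • (A u - B u)‖
            + (‖(aa s - aa t) • Wc i₀ i₁ (θf s u)‖
              + ‖aa t • (Wc i₀ i₁ (θf s u) - Wc i₀ i₁ (θf t u))‖) :=
            le_trans (norm_add_le _ _) (by gcongr; exact norm_add_le _ _)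
        _ ≤ |(s:ℝ) - (t:ℝ)| * (d₁ + d₂) + (2 * (ε * |(s:ℝ) - (t:ℝ)|)
            + (8 * Real.pi * ε * C / ut t) * |(s:ℝ) - (t:ℝ)|) :=
            add_le_add hb1 (add_le_add hb2 hb3)
        _ = |(s:ℝ) - (t:ℝ)| * (Q - 1) := by rw [hQdef]; ring
        _ ≤ (ε₀ / (2 * Q)) * Q := by
            have h8 : 0 ≤ 8 * Real.pi * ε * C / ut t :=
              div_nonneg (mul_nonneg (mul_nonneg (mul_nonneg (by norm_num) Real.pi_pos.le)
                hεpos.le) hCpos.le) (hutnn t)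
            have h1 : |(s:ℝ) - (t:ℝ)| * (Q - 1) ≤ (ε₀ / (2 * Q)) * (Q - 1) := by
              apply mul_le_mul_of_nonneg_right hs2.le (by rw [hQdef]; linarith)
            have h2 : (ε₀ / (2 * Q)) * (Q - 1) ≤ (ε₀ / (2 * Q)) * Q := by
              apply mul_le_mul_of_nonneg_left (by linarith) (by positivity)
            linarith
        _ = ε₀ / 2 := by field_simp
  -- assemble
  refine ⟨Γ, fun t => ⟨hΓcont t, hΓbv t, hΓinj t⟩, ?_, ?_, hcont_t,
    fun t => dFP_lt_of_forall_dist_le _ _ (hmain t) (by linarith) hδ⟩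
  · rw [hΓ0, hAdef]
    exact dFP_comp_homeo_zero β₁ r₁
  · rw [hΓ1, hBdef]
    exact dFP_comp_homeo_zero β₂ r₂
end

section
/- For n = 1, the space of embedded paths in ℝ under the path Fréchet distance is not path-connected: for α, β : [0,1] → ℝ given by α(t) = t and β(t) = 1 − t (both continuous, rectifiable, and injective), there is no family Γ : [0,1] → ([0,1] → ℝ) such that each Γ_t is continuous and injective, d_FP(Γ_0, α) = 0, d_FP(Γ_1, β) = 0, and t ↦ Γ_t is continuous with respect to d_FP. -/
open unitInterval

/-- A homeomorphism of the unit interval fixing `0` also fixes `1`. -/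
lemma dFP_homeo_one (r : unitInterval ≃ₜ unitInterval) (h0 : r 0 = 0) : r 1 = 1 := by
  obtain ⟨s, hs⟩ := r.surjective 1
  have h0s : (0 : unitInterval) ≤ s := s.2.1
  have himg : Subtype.val '' Set.Icc (0:unitInterval) s = Set.Icc (0:ℝ) (s:ℝ) := by
    ext x
    constructor
    · rintro ⟨u, hu, rfl⟩
      exact ⟨hu.1, hu.2⟩
    · rintro ⟨hx0, hxs⟩
      exact ⟨⟨x, hx0, hxs.trans s.2.2⟩, ⟨hx0, hxs⟩, rfl⟩
  have hpre : IsPreconnected (Set.Icc (0:unitInterval) s) := by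
    rw [← Topology.IsInducing.subtypeVal.isPreconnected_image, himg]
    exact isPreconnected_Icc
  have key := hpre.intermediate_value (a := 0) (b := s)
    ⟨le_refl _, h0s⟩ ⟨h0s, le_refl _⟩ (r.continuous.continuousOn)
  have hr1 : r 1 ∈ Set.Icc (r 0) (r s) := by
    rw [h0, hs]; exact ⟨(r 1).2.1, (r 1).2.2⟩
  obtain ⟨u, hu, hur⟩ := key hr1
  have hu1 : u = 1 := r.injective hur
  have hse : s = 1 := le_antisymm s.2.2 (hu1 ▸ hu.2)
  rw [hse] at hs
  exact hs

/-- The endpoint distances bound `dFP` from below. -/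
lemma dFP_endpoints {α β : unitInterval → ℝ} {c : ENNReal} (h : dFP α β < c) :
    edist (α 0) (β 0) < c ∧ edist (α 1) (β 1) < c := by
  rw [dFP, iInf_lt_iff] at h
  obtain ⟨r, hr⟩ := h
  constructor
  · refine lt_of_le_of_lt ?_ hr
    have := le_iSup (fun t : unitInterval => edist (α t) (β (r.1 t))) 0
    rwa [r.2] at this
  · refine lt_of_le_of_lt ?_ hr
    have := le_iSup (fun t : unitInterval => edist (α t) (β (r.1 t))) 1
    rwa [dFP_homeo_one r.1 r.2] at this

lemma dFP_zero_endpoints {α β : unitInterval → ℝ} (h : dFP α β = 0) :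
    α 0 = β 0 ∧ α 1 = β 1 := by
  have h0 : ∀ c : ENNReal, 0 < c → edist (α 0) (β 0) < c ∧ edist (α 1) (β 1) < c := by
    intro c hc
    exact dFP_endpoints (h ▸ hc)
  constructor
  · apply eq_of_edist_eq_zero
    by_contra hne
    exact absurd ((h0 _ (pos_iff_ne_zero.mpr hne)).1) (lt_irrefl _)
  · apply eq_of_edist_eq_zero
    by_contra hne
    exact absurd ((h0 _ (pos_iff_ne_zero.mpr hne)).2) (lt_irrefl _)

/-- For n = 1, the space of embedded paths in ℝ under the path Fréchet
distance is not path-connected: there is no continuous family of injective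
paths from α(t) = t to β(t) = 1 - t. -/
theorem embedded_paths_not_path_connected_dim_one :
    ¬ ∃ Γ : unitInterval → unitInterval → ℝ,
      (∀ t, Continuous (Γ t) ∧ Function.Injective (Γ t)) ∧
      dFP (Γ 0) (fun t : unitInterval => (t : ℝ)) = 0 ∧
      dFP (Γ 1) (fun t : unitInterval => 1 - (t : ℝ)) = 0 ∧
      (∀ t : unitInterval, ∀ ε : ℝ, 0 < ε → ∃ δ : ℝ, 0 < δ ∧
        ∀ s : unitInterval, |(s : ℝ) - (t : ℝ)| < δ →
          dFP (Γ s) (Γ t) < ENNReal.ofReal ε) := by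
  rintro ⟨Γ, hΓ, h0, h1, hcont⟩
  -- the endpoint-difference function
  set f : unitInterval → ℝ := fun t => Γ t 1 - Γ t 0 with hf
  have hfc : Continuous f := by
    rw [Metric.continuous_iff]
    intro t ε hε
    obtain ⟨δ, hδ, hδ'⟩ := hcont t (ε / 2) (by linarith)
    refine ⟨δ, hδ, fun s hst => ?_⟩
    rw [Subtype.dist_eq, Real.dist_eq] at hst
    obtain ⟨he0, he1⟩ := dFP_endpoints (hδ' s hst)
    rw [edist_lt_ofReal] at he0 he1
    calc dist (f s) (f t) = dist (Γ s 1 - Γ s 0) (Γ t 1 - Γ t 0) := rfl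
      _ ≤ dist (Γ s 1) (Γ t 1) + dist (Γ s 0) (Γ t 0) := dist_sub_sub_le _ _ _ _
      _ < ε / 2 + ε / 2 := add_lt_add he1 he0
      _ = ε := by ring
  have hf0 : f 0 = 1 := by
    obtain ⟨ha, hb⟩ := dFP_zero_endpoints h0
    simp only [hf]
    rw [ha, hb]
    norm_num
  have hf1 : f 1 = -1 := by
    obtain ⟨ha, hb⟩ := dFP_zero_endpoints h1
    simp only [hf]
    rw [ha, hb]
    norm_num
  have hmem : (0:ℝ) ∈ Set.Icc (f 1) (f 0) := by rw [hf0, hf1]; norm_num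
  obtain ⟨s, hs⟩ := intermediate_value_univ 1 0 hfc hmem
  have : Γ s 1 = Γ s 0 := by
    have := hs
    simp only [hf] at this
    linarith
  have h10 : (1 : unitInterval) = 0 := (hΓ s).2 this
  have : (1:ℝ) = 0 := congrArg Subtype.val h10
  norm_num at this
end
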